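/- Let T be a triangulated category with a t-structure such that the coaisle T_{≥0} is closed under countable coproducts, H^0_t : T → T^♥ preserves countable coproducts, and the heart T^♥ satisfies AB5. Then T is right complete for the t-structure if and only if ⋂_{n≥0} T_{≥n} = 0. -/

import Mathlib

/-!
STATEMENT 3: Let `T` be a triangulated category with a t-structure whose coaisle
`T_{≥0}` is closed under countable coproducts, such that `H^0_t : T → T^♥`
preserves countable coproducts and the heart satisfies AB5.  Then `T` is right
complete for the t-structure iff `⋂_{n ≥ 0} T_{≥n} = 0`.

Right completeness: for every `Z ∈ T_{≥0}`, any map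
`φ : hocolim τ_{≤n} Z ⟶ Z` arising from the triangle axiom (T3) applied to the
`1 - shift` triangle is an isomorphism.  The truncation functors `τ_{≤n}` (with
the canonical maps to the identity and the connecting maps), as well as the
heart-valued homological functor `H = H^0_t`, are given as data with their
defining properties.
-/

open CategoryTheory Limits Pretriangulated Triangulated

namespace Stmt3Aux
attribute [local instance] CategoryTheory.Abelian.hasFiniteBiproducts

section Telescope

variable {A : Type*} [Category A] [Abelian A]
variable (a : ℕ → A) (f : ∀ m, a m ⟶ a (m + 1))

/-- The ladder of finite partial biproducts. -/
noncomputable def ladder (r : ℕ) : ℕ ⥤ A where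
  obj n := ⨁ (fun i : Fin (n + r) => a i.val)
  map {n n'} h := biproduct.desc fun i => biproduct.ι (fun i : Fin (n' + r) => a i.val)
    (Fin.castLE (by have := leOfHom h; omega) i)
  map_id n := by
    ext i
    simp [Fin.castLE]
  map_comp {n n' n''} h h' := by
    ext i
    simp [Fin.castLE]

variable {P : A} (ι : ∀ m, a m ⟶ P)

/-- The cocone on the ladder with apex `P`. -/
noncomputable def ladderCocone (r : ℕ) : Cocone (ladder a r) where
  pt := P
  ι := {
    app := fun n => biproduct.desc fun i => ι i.val
    naturality := fun n n' h => by
      dsimp [ladder]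
      ext i
      simp [Fin.castLE] }

variable (hP : IsColimit (Cofan.mk P ι))

lemma ι_cocone_leg (r : ℕ) (m : ℕ) :
    biproduct.ι (fun i : Fin (m + 1 + r) => a i.val) ⟨m, by omega⟩ ≫
      (ladderCocone a ι r).ι.app (m + 1) = ι m := by
  simp [ladderCocone]

/-- The ladder cocone is colimit. -/
noncomputable def ladderIsColimit (r : ℕ) : IsColimit (ladderCocone a ι r) where
  desc c := hP.desc (Cofan.mk c.pt (fun m =>
    biproduct.ι (fun i : Fin (m + 1 + r) => a i.val) ⟨m, by omega⟩ ≫ c.ι.app (m + 1)))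
  fac c n := by
    dsimp [ladderCocone]
    refine biproduct.hom_ext' _ _ fun i => ?_
    erw [biproduct.ι_desc_assoc]
    have h1 : ι i.val ≫ hP.desc (Cofan.mk c.pt (fun m =>
        biproduct.ι (fun j : Fin (m + 1 + r) => a j.val) ⟨m, by omega⟩ ≫ c.ι.app (m + 1))) =
        biproduct.ι (fun j : Fin (i.val + 1 + r) => a j.val) ⟨i.val, by omega⟩ ≫
          c.ι.app (i.val + 1) :=
      hP.fac _ ⟨i.val⟩
    rw [h1]
    -- now compare the two cocone legs at stages `i.val + 1` and `n` via stage `max (i+1) n`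
    have w1 := c.w (homOfLE (le_max_left (i.val + 1) n))
    have w2 := c.w (homOfLE (le_max_right (i.val + 1) n))
    rw [← w1, ← w2]
    dsimp [ladder]
    rw [biproduct.ι_desc_assoc, biproduct.ι_desc_assoc]
    congr 1
  uniq c m hm := by
    refine hP.hom_ext fun ⟨j⟩ => ?_
    have h2 := hP.fac (Cofan.mk c.pt (fun m =>
      biproduct.ι (fun i : Fin (m + 1 + r) => a i.val) ⟨m, by omega⟩ ≫ c.ι.app (m + 1))) ⟨j⟩
    dsimp at h2 ⊢
    rw [h2, ← ι_cocone_leg a ι r j]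
    erw [Category.assoc, hm (j+1)]

/-- The one-minus-shift natural transformation between ladders. -/
noncomputable def ladderShiftHom : ladder a 0 ⟶ ladder a 1 where
  app n := biproduct.desc fun i : Fin (n + 0) =>
    biproduct.ι (fun j : Fin (n + 1) => a j.val) ⟨i.val, by omega⟩ -
      f i.val ≫ biproduct.ι (fun j : Fin (n + 1) => a j.val) ⟨i.val + 1, by omega⟩
  naturality n n' h := by
    dsimp [ladder]
    ext i
    simp [Fin.castLE]

/-- The nilpotent lower shift on a finite biproduct. -/
noncomputable def nu (n : ℕ) : End (⨁ fun j : Fin (n + 1) => a j.val) :=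
  biproduct.desc fun j => if h : j.val < n then
    f j.val ≫ biproduct.ι (fun j : Fin (n + 1) => a j.val) ⟨j.val + 1, by omega⟩ else 0

lemma nu_pow_aux (n : ℕ) : ∀ (k : ℕ) (j : Fin (n + 1)), n < j.val + k →
    biproduct.ι (fun j : Fin (n + 1) => a j.val) j ≫ ((nu a f n) ^ k : End _) = 0 := by
  intro k
  induction k with
  | zero => intro j hj; exact absurd j.isLt (by omega)
  | succ k ih =>
    intro j hj
    have : ((nu a f n) ^ (k + 1) : End _) = (nu a f n) ≫ ((nu a f n) ^ k : End _) := by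
      rw [pow_succ]; rfl
    rw [this, ← Category.assoc]
    rw [show biproduct.ι (fun j : Fin (n + 1) => a j.val) j ≫ (nu a f n) =
      if h : j.val < n then
        f j.val ≫ biproduct.ι (fun j : Fin (n + 1) => a j.val) ⟨j.val + 1, by omega⟩ else 0
      from biproduct.ι_desc _ _]
    split
    · rw [Category.assoc, ih ⟨j.val + 1, by omega⟩ (by simp only [Fin.val_mk]; omega), comp_zero]
    · rw [zero_comp]

lemma nu_pow (n : ℕ) : ((nu a f n) ^ (n + 1) : End _) = 0 := by
  refine biproduct.hom_ext' _ _ fun j => ?_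
  rw [nu_pow_aux a f n (n + 1) j (by omega), comp_zero]

/-- The inclusion of the `n`-th stage into the `n+1`-st. -/
noncomputable def incl (n : ℕ) : (⨁ fun i : Fin (n + 0) => a i.val) ⟶
    (⨁ fun j : Fin (n + 1) => a j.val) :=
  biproduct.desc fun i => biproduct.ι (fun j : Fin (n + 1) => a j.val) ⟨i.val, by omega⟩

instance incl_mono (n : ℕ) : Mono (incl a n) := by
  have : incl a n ≫ biproduct.lift (fun i : Fin (n + 0) =>
      biproduct.π (fun j : Fin (n + 1) => a j.val) ⟨i.val, by omega⟩) = 𝟙 _ := by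
    refine biproduct.hom_ext' _ _ fun i => ?_
    refine biproduct.hom_ext _ _ fun i' => ?_
    simp only [incl, Category.assoc, biproduct.ι_desc_assoc, biproduct.lift_π,
      Category.id_comp, Category.comp_id, biproduct.ι_π]
    by_cases h : i = i'
    · subst h; rw [dif_pos rfl, dif_pos rfl]
    · rw [dif_neg h, dif_neg (by simp [Fin.ext_iff] at h ⊢; omega)]
  exact mono_of_mono_fac this

lemma ladderShiftHom_app_eq (n : ℕ) :
    (ladderShiftHom a f).app n = incl a n ≫ ((1 : End _) - nu a f n) := by
  refine biproduct.hom_ext' _ _ fun i => ?_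
  have hi : (i : ℕ) < n := by simpa using i.isLt
  simp only [ladderShiftHom, incl, nu, biproduct.ι_desc, biproduct.ι_desc_assoc,
    Preadditive.comp_sub, End.one_def, Category.comp_id, hi, dif_pos]
  erw [Preadditive.comp_sub, Category.comp_id, biproduct.ι_desc, biproduct.ι_desc,
    dif_pos (show ((⟨(i : ℕ), by omega⟩ : Fin (n + 1)) : ℕ) < n by simpa using i.isLt)]
  rfl

instance ladderShiftHom_app_mono (n : ℕ) : Mono ((ladderShiftHom a f).app n) := by
  rw [ladderShiftHom_app_eq]
  haveI : IsIso ((1 : End (⨁ fun j : Fin (n + 1) => a j.val)) - nu a f n) := by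
    rw [← isUnit_iff_isIso]
    exact IsNilpotent.isUnit_one_sub ⟨n + 1, nu_pow a f n⟩
  haveI hm1 : Mono ((1 : End (⨁ fun j : Fin (n + 1) => a j.val)) - nu a f n) := IsIso.mono_of_iso _
  exact mono_comp' (incl_mono a n) hm1

lemma ladderShiftHom_leg (v : P ⟶ P) (hv : ∀ m, ι m ≫ v = ι m - f m ≫ ι (m + 1)) (n : ℕ) :
    (ladderShiftHom a f).app n ≫ (ladderCocone a ι 1).ι.app n =
      (ladderCocone a ι 0).ι.app n ≫ v := by
  dsimp [ladderCocone, ladder]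
  refine biproduct.hom_ext' _ _ fun i => ?_
  simp only [ladderShiftHom, biproduct.ι_desc_assoc, Preadditive.sub_comp, Category.assoc,
    biproduct.ι_desc, hv i.val]
  erw [biproduct.ι_desc_assoc]
  simp [Preadditive.sub_comp]

end Telescope

section TelescopeCoker

variable {A : Type*} [Category A] [Abelian A]

lemma telescope_epi (a : ℕ → A) {B : A} (c : ∀ m, a m ⟶ B) (N : ℕ) (hiso : IsIso (c N))
    {P : A} (ι : ∀ m, a m ⟶ P) (w : P ⟶ B) (hw : ∀ m, ι m ≫ w = c m) : Epi w := by
  have : (inv (c N) ≫ ι N) ≫ w = 𝟙 B := by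
    rw [Category.assoc, hw, IsIso.inv_hom_id]
  exact epi_of_epi_fac this

noncomputable def telescope_isCokernel (a : ℕ → A) (f : ∀ m, a m ⟶ a (m + 1)) {B : A} (c : ∀ m, a m ⟶ B)
    (hc : ∀ m, f m ≫ c (m + 1) = c m) (N : ℕ)
    (hiso : ∀ m, N ≤ m → IsIso (c m)) (hzero : ∀ m, m < N → IsZero (a m))
    {P : A} (ι : ∀ m, a m ⟶ P) (hP : IsColimit (Cofan.mk P ι))
    (v : P ⟶ P) (hv : ∀ m, ι m ≫ v = ι m - f m ≫ ι (m + 1))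
    (w : P ⟶ B) (hw : ∀ m, ι m ≫ w = c m) (hvw : v ≫ w = 0) :
    IsColimit (CokernelCofork.ofπ w hvw) := by
  haveI := hiso N le_rfl
  haveI : ∀ m, N ≤ m → IsIso (f m) := by
    intro m hm
    haveI := hiso m hm
    haveI := hiso (m + 1) (by omega)
    have : f m = c m ≫ inv (c (m + 1)) := by
      rw [IsIso.eq_comp_inv, hc]
    rw [this]
    infer_instance
  refine CokernelCofork.IsColimit.ofπ _ _
    (fun {T} t ht => inv (c N) ≫ ι N ≫ t) ?_ ?_
  · intro T t ht
    have step1 : ∀ m, ι m ≫ t = f m ≫ ι (m + 1) ≫ t := by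
      intro m
      have h0 : (ι m - f m ≫ ι (m + 1)) ≫ t = 0 := by
        rw [← hv m, Category.assoc, ht, comp_zero]
      rw [Preadditive.sub_comp, sub_eq_zero] at h0
      simpa using h0
    have step2 : ∀ k, ι (N + k) ≫ t = c (N + k) ≫ inv (c N) ≫ ι N ≫ t := by
      intro k
      induction k with
      | zero => simp
      | succ k ih =>
        haveI := this (N + k) (by omega)
        rw [show N + (k + 1) = (N + k) + 1 from rfl]
        rw [← cancel_epi (f (N + k)), ← step1 (N + k), ih]
        simp only [← Category.assoc]
        rw [hc]
    refine hP.hom_ext fun ⟨m⟩ => ?_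
    have hm1 : (Cofan.mk P ι).inj m ≫ w ≫ inv (c N) ≫ ι N ≫ t = ι m ≫ t := by
      show ι m ≫ w ≫ inv (c N) ≫ ι N ≫ t = ι m ≫ t
      rw [← Category.assoc, hw]
      by_cases hm : N ≤ m
      · obtain ⟨k, rfl⟩ := Nat.le.dest hm
        rw [step2 k]
      · exact (hzero m (by omega)).eq_of_src _ _
    exact hm1
  · intro T t ht m hm
    show m = inv (c N) ≫ ι N ≫ t
    calc m = 𝟙 B ≫ m := by rw [Category.id_comp]
      _ = (inv (c N) ≫ c N) ≫ m := by rw [IsIso.inv_hom_id]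
      _ = inv (c N) ≫ (ι N ≫ w) ≫ m := by rw [hw]; simp only [Category.assoc]
      _ = inv (c N) ≫ ι N ≫ t := by rw [Category.assoc, hm]

end TelescopeCoker

section TelescopeMono

universe v u

variable {A : Type u} [Category.{v} A] [Abelian A] [HasFilteredColimits A] [AB5 A]

lemma telescope_mono (a : ℕ → A) (f : ∀ m, a m ⟶ a (m + 1)) {P : A} (ι : ∀ m, a m ⟶ P)
    (hP : IsColimit (Cofan.mk P ι)) (v : P ⟶ P)
    (hv : ∀ m, ι m ≫ v = ι m - f m ≫ ι (m + 1)) : Mono v := by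
  let e : ℕ ≌ AsSmall.{v} ℕ := AsSmall.equiv
  haveI : IsFiltered (AsSmall.{v} ℕ) := IsFiltered.of_equivalence e
  let F0 : AsSmall.{v} ℕ ⥤ A := e.inverse ⋙ ladder a 0
  let F1 : AsSmall.{v} ℕ ⥤ A := e.inverse ⋙ ladder a 1
  let μ' : F0 ⟶ F1 := Functor.whiskerLeft e.inverse (ladderShiftHom a f)
  haveI happ : ∀ X, Mono (μ'.app X) := fun X =>
    ladderShiftHom_app_mono a f (AsSmall.down.obj X)
  haveI : Mono μ' := NatTrans.mono_of_mono_app _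
  haveI : PreservesFiniteLimits (colim (J := AsSmall.{v} ℕ) (C := A)) :=
    HasExactColimitsOfShape.preservesFiniteLimits
  haveI hm : Mono (colim.map μ') := colim.map_mono μ'
  let hc0 : IsColimit (Cocone.whisker e.symm.functor (ladderCocone a ι 0)) :=
    IsColimit.whiskerEquivalence (ladderIsColimit a ι hP 0) e.symm
  let hc1 : IsColimit (Cocone.whisker e.symm.functor (ladderCocone a ι 1)) :=
    IsColimit.whiskerEquivalence (ladderIsColimit a ι hP 1) e.symm
  let α0 : colimit F0 ≅ P := (colimit.isColimit F0).coconePointUniqueUpToIso hc0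
  let α1 : colimit F1 ≅ P := (colimit.isColimit F1).coconePointUniqueUpToIso hc1
  have key : α0.hom ≫ v = colim.map μ' ≫ α1.hom := by
    refine colimit.hom_ext fun j => ?_
    rw [colimit.ι_map_assoc]
    erw [colimit.comp_coconePointUniqueUpToIso_hom,
      colimit.comp_coconePointUniqueUpToIso_hom_assoc]
    exact (ladderShiftHom_leg a f ι v hv (AsSmall.down.obj j)).symm
  haveI : Mono (α0.hom ≫ v) := by
    rw [key]
    exact mono_comp _ _
  have hvfac : v = α0.inv ≫ (α0.hom ≫ v) := by simp
  rw [hvfac]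
  exact mono_comp _ _

end TelescopeMono

section TAux

open Pretriangulated Triangulated

variable {C : Type*} [Category C] [Preadditive C] [HasZeroObject C] [HasShift C ℤ]
  [∀ n : ℤ, (shiftFunctor C n).Additive] [Pretriangulated C]

lemma tstructure_zero (t : TStructure C) {X Y : C} (f : X ⟶ Y) (a b : ℤ) (hab : a < b)
    (hX : t.le a X) (hY : t.ge b Y) : f = 0 := by
  have hX' : t.le 0 (X⟦a⟧) := t.le_shift a a 0 (add_zero a) X hX
  have hY' : t.ge 1 (Y⟦a⟧) := t.ge_antitone (show (1 : ℤ) ≤ b - a by omega) _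
    (t.ge_shift b a (b - a) (by omega) Y hY)
  have h0 : (shiftFunctor C a).map f = 0 := t.zero' _ hX' hY'
  exact (shiftFunctor C a).map_injective (by rw [h0, Functor.map_zero])

lemma ge_of_forall_zero (t : TStructure C) (X : C) (n : ℤ)
    (hX : ∀ (Q : C), t.le (n - 1) Q → ∀ f : Q ⟶ X, f = 0) : t.ge n X := by
  obtain ⟨Q, Y, hQ, hY, q, g, h, mem⟩ := t.exists_triangle X (n - 1) n (by ring)
  have hq : q = 0 := hX Q hQ q
  -- the identity of `Q` factors through `Y⟦-1⟧`
  have mem' := inv_rot_of_distTriang _ mem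
  obtain ⟨e, he⟩ := Triangle.coyoneda_exact₂ _ mem' (𝟙 Q)
    (by erw [Category.id_comp]; exact hq)
  have he0 : e = 0 := tstructure_zero t e (n - 1) (n + 1) (by omega) hQ
    (t.ge_shift n (-1) (n + 1) (by ring) Y hY)
  have hQzero : IsZero Q := by
    rw [IsZero.iff_id_eq_zero, he, he0, zero_comp]; rfl
  have : IsIso ((Triangle.mk q g h).mor₂) :=
    (Triangle.isZero₁_iff_isIso₂ _ mem).1 hQzero
  exact ((t.ge n).prop_iff_of_iso (asIso ((Triangle.mk q g h).mor₂))).2 hY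

lemma ge_ext (t : TStructure C) (T : Triangle C) (hT : T ∈ distTriang C) (n : ℤ)
    (h1 : t.ge n T.obj₁) (h3 : t.ge n T.obj₃) : t.ge n T.obj₂ := by
  refine ge_of_forall_zero t _ n fun Q hQ f => ?_
  have hf2 : f ≫ T.mor₂ = 0 := tstructure_zero t _ (n - 1) n (by omega) hQ h3
  obtain ⟨g, hg⟩ := Triangle.coyoneda_exact₂ _ hT f hf2
  rw [hg, tstructure_zero t g (n - 1) n (by omega) hQ h1, zero_comp]

end TAux

end Stmt3Aux

namespace Stmt3

variable {C : Type*} [Category C]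
  [Preadditive C] [HasZeroObject C] [HasShift C ℤ]
  [∀ n : ℤ, (shiftFunctor C n).Additive] [Pretriangulated C]
  [HasColimitsOfShape (Discrete ℕ) C]
  (τle : ℤ → C ⥤ C) (σ : ∀ n : ℤ, τle n ⟶ τle (n + 1))

/-- The `1 - shift` endomorphism of `∐ (τ_{≤n} Z)`. -/
noncomputable def oneMinusShift (Z : C) :
    (∐ fun n : ℕ => (τle (n : ℤ)).obj Z) ⟶ (∐ fun n : ℕ => (τle (n : ℤ)).obj Z) :=
  Sigma.desc fun n => Sigma.ι (fun m : ℕ => (τle (m : ℤ)).obj Z) n -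
    ((σ (n : ℤ)).app Z ≫ eqToHom (by rw [Nat.cast_succ]) ≫
      Sigma.ι (fun m : ℕ => (τle (m : ℤ)).obj Z) (n + 1))

/-- Right completeness of the t-structure: any map from a homotopy colimit of the
truncations `τ_{≤n} Z` to `Z ∈ T_{≥0}` arising from (T3) is an isomorphism. -/
def RightComplete (t : TStructure C) (η : ∀ n : ℤ, τle n ⟶ 𝟭 C) : Prop :=
  ∀ (Z : C), t.ge 0 Z →
    ∀ (L : C) (g : (∐ fun n : ℕ => (τle (n : ℤ)).obj Z) ⟶ L)
      (d : L ⟶ (∐ fun n : ℕ => (τle (n : ℤ)).obj Z)⟦(1 : ℤ)⟧),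
      (Triangle.mk (oneMinusShift τle σ Z) g d ∈ distTriang C) →
      ∀ φ : L ⟶ Z,
        (∀ n : ℕ, Sigma.ι (fun m : ℕ => (τle (m : ℤ)).obj Z) n ≫ g ≫ φ =
          (η (n : ℤ)).app Z) →
        IsIso φ

theorem stmt3 (t : TStructure C)
    (hle : ∀ (i : ℤ) (X : C), t.le i ((τle i).obj X))
    (η : ∀ n : ℤ, τle n ⟶ 𝟭 C)
    (ησ : ∀ (n : ℤ) (X : C), (σ n).app X ≫ (η (n + 1)).app X = (η n).app X)
    (htri : ∀ (i : ℤ) (X : C), ∃ (Y : C) (_ : t.ge (i + 1) Y)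
      (g : X ⟶ Y) (d : Y ⟶ ((τle i).obj X)⟦(1 : ℤ)⟧),
      Triangle.mk ((η i).app X) g d ∈ distTriang C)
    -- the coaisle is closed under countable coproducts
    (hcoprod : ∀ f : ℕ → C, (∀ n, t.ge 0 (f n)) → t.ge 0 (∐ f))
    -- the heart and the homological functor `H^0_t`
    {A : Type*} [Category A] [Abelian A] [HasFilteredColimits A] [AB5 A]
    (H : C ⥤ A) [H.IsHomological] [PreservesColimitsOfShape (Discrete ℕ) H]
    (hH_le : ∀ X : C, t.le (-1) X → IsZero (H.obj X))
    (hH_ge : ∀ X : C, t.ge 1 X → IsZero (H.obj X))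
    (hH_detect : ∀ (X : C) (n : ℤ), t.ge n X → IsZero (H.obj (X⟦n⟧)) →
      t.ge (n + 1) X) :
    RightComplete τle σ t η ↔ (∀ X : C, (∀ n : ℕ, t.ge (n : ℤ) X) → IsZero X) := by
  constructor
  · -- right completeness implies the intersection of the coaisles is zero
    intro hrc X hX
    obtain ⟨L, g, d, hT⟩ := distinguished_cocone_triangle (oneMinusShift τle σ X)
    have h0 : ∀ n : ℕ, Sigma.ι (fun m : ℕ => (τle (m : ℤ)).obj X) n ≫ g ≫ (0 : L ⟶ X) =
        (η (n : ℤ)).app X := by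
      intro n
      rw [comp_zero, comp_zero]
      refine (Stmt3Aux.tstructure_zero t _ (n : ℤ) ((n : ℤ) + 1) (by omega) (hle _ X) ?_).symm
      have := hX (n + 1)
      rwa [Nat.cast_succ] at this
    have := hrc X (by simpa using hX 0) L g d hT 0 h0
    rw [IsZero.iff_id_eq_zero]
    calc 𝟙 X = inv (0 : L ⟶ X) ≫ (0 : L ⟶ X) := (IsIso.inv_hom_id _).symm
      _ = 0 := by simp
  · -- the intersection of the coaisles being zero implies right completeness
    intro hint Z hZ L g d hT φ hφ
    classical
    letI : H.ShiftSequence ℤ := Functor.ShiftSequence.tautological H ℤ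
    -- the transition maps and the maps to `Z`
    let fC : ∀ m : ℕ, (τle ((m : ℕ) : ℤ)).obj Z ⟶ (τle (((m + 1 : ℕ)) : ℤ)).obj Z := fun m =>
      (σ (m : ℤ)).app Z ≫ eqToHom (by rw [Nat.cast_succ])
    have keyEq : ∀ (i j : ℤ) (h : i = j),
        eqToHom (show (τle i).obj Z = (τle j).obj Z by rw [h]) ≫ (η j).app Z =
          (η i).app Z := by
      rintro i j rfl; simp
    have hfe : ∀ m : ℕ, fC m ≫ (η ((m + 1 : ℕ) : ℤ)).app Z = (η (m : ℤ)).app Z := by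
      intro m
      dsimp only [fC]
      rw [Category.assoc, keyEq ((m : ℤ) + 1) (((m + 1 : ℕ)) : ℤ) (by push_cast; ring), ησ]
    have hui : ∀ m : ℕ, Sigma.ι (fun m : ℕ => (τle (m : ℤ)).obj Z) m ≫ oneMinusShift τle σ Z =
        Sigma.ι (fun m : ℕ => (τle (m : ℤ)).obj Z) m -
          fC m ≫ Sigma.ι (fun m : ℕ => (τle (m : ℤ)).obj Z) (m + 1) := by
      intro m
      dsimp only [oneMinusShift, fC]
      rw [colimit.ι_desc]
      dsimp
      rw [Category.assoc]
    -- the truncation triangles of `Z`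
    choose Y hYge gm dm hTm using fun m : ℕ => htri (m : ℤ) Z
    -- `GE` facts
    have hXge : ∀ m : ℕ, t.ge 0 ((τle ((m : ℕ) : ℤ)).obj Z) := by
      intro m
      refine Stmt3Aux.ge_ext t _ (inv_rot_of_distTriang _ (hTm m)) 0 ?_ ?_
      · exact t.ge_antitone (by omega : (0 : ℤ) ≤ (m : ℤ) + 2) _
          (t.ge_shift ((m : ℤ) + 1) (-1) ((m : ℤ) + 2) (by ring) _ (hYge m))
      · exact hZ
    have hSge : t.ge 0 (∐ fun m : ℕ => (τle (m : ℤ)).obj Z) := hcoprod _ hXge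
    have hLge : t.ge (-1) L := by
      refine Stmt3Aux.ge_ext t _ (rot_of_distTriang _ hT) (-1) ?_ ?_
      · exact t.ge_antitone (by omega : (-1 : ℤ) ≤ 0) _ hSge
      · exact t.ge_shift 0 1 (-1) (by ring) _ hSge
    obtain ⟨W, w2, d2, hT2⟩ := distinguished_cocone_triangle φ
    have hWge : t.ge (-2) W := by
      refine Stmt3Aux.ge_ext t _ (rot_of_distTriang _ hT2) (-2) ?_ ?_
      · exact t.ge_antitone (by omega : (-2 : ℤ) ≤ 0) _ hZ
      · exact t.ge_shift (-1) 1 (-2) (by ring) _ hLge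
    -- the key telescope facts, in each degree `k`
    have pack : ∀ k : ℤ,
        Mono ((H.shift k).map (oneMinusShift τle σ Z)) ∧
        Epi ((H.shift k).map g ≫ (H.shift k).map φ) ∧
        (∀ (T : A) (y : T ⟶ (H.shift k).obj (∐ fun m : ℕ => (τle (m : ℤ)).obj Z)),
          y ≫ ((H.shift k).map g ≫ (H.shift k).map φ) = 0 →
          ∃ (T' : A) (π : T' ⟶ T) (_ : Epi π)
            (z : T' ⟶ (H.shift k).obj (∐ fun m : ℕ => (τle (m : ℤ)).obj Z)),
            π ≫ y = z ≫ (H.shift k).map (oneMinusShift τle σ Z)) := by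
      intro k
      haveI hps : PreservesColimitsOfShape (Discrete ℕ) (H.shift k) :=
        inferInstanceAs (PreservesColimitsOfShape (Discrete ℕ) (shiftFunctor C k ⋙ H))
      -- the coproduct cofan is sent to a colimit cofan
      have hP : IsColimit (Cofan.mk ((H.shift k).obj (∐ fun m : ℕ => (τle (m : ℤ)).obj Z))
          (fun m : ℕ => (H.shift k).map
            (Sigma.ι (fun m : ℕ => (τle (m : ℤ)).obj Z) m))) :=
        isColimitOfHasCoproductOfPreservesColimit (H.shift k) _
      -- data for the telescope lemmas
      have hcA : ∀ m : ℕ, (H.shift k).map (fC m) ≫ (H.shift k).map ((η ((m + 1 : ℕ) : ℤ)).app Z)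
          = (H.shift k).map ((η ((m : ℕ) : ℤ)).app Z) := by
        intro m
        rw [← Functor.map_comp, hfe m]
      have hisoA : ∀ m : ℕ, k.toNat ≤ m → IsIso ((H.shift k).map ((η ((m : ℕ) : ℤ)).app Z)) := by
        intro m hm
        have hmk : k ≤ (m : ℤ) := Int.toNat_le.1 hm
        have hY1 : IsZero ((H.shift k).obj (Y m)) :=
          hH_ge _ (t.ge_antitone (by omega : (1 : ℤ) ≤ (m : ℤ) + 1 - k) _
            (t.ge_shift ((m : ℤ) + 1) k ((m : ℤ) + 1 - k) (by ring) _ (hYge m)))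
        have hY0 : IsZero ((H.shift (k - 1)).obj (Y m)) :=
          hH_ge _ (t.ge_antitone (by omega : (1 : ℤ) ≤ (m : ℤ) + 1 - (k - 1)) _
            (t.ge_shift ((m : ℤ) + 1) (k - 1) ((m : ℤ) + 1 - (k - 1)) (by ring) _ (hYge m)))
        haveI hepi : Epi ((H.shift k).map ((η ((m : ℕ) : ℤ)).app Z)) := by
          have hex := H.homologySequence_exact₂ _ (hTm m) k
          exact hex.epi_f (hY1.eq_zero_of_tgt _)
        haveI hmono : Mono ((H.shift k).map ((η ((m : ℕ) : ℤ)).app Z)) := by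
          have hex := H.homologySequence_exact₁ _ (hTm m) (k - 1) k (by ring)
          exact hex.mono_g (hY0.eq_zero_of_src _)
        exact isIso_of_mono_of_epi _
      have hzeroA : ∀ m : ℕ, m < k.toNat → IsZero ((H.shift k).obj ((τle ((m : ℕ) : ℤ)).obj Z)) := by
        intro m hm
        have hmk : (m : ℤ) < k := Int.lt_toNat.1 hm
        exact hH_le _ (t.le_monotone (by omega : (m : ℤ) - k ≤ -1) _
          (t.le_shift (m : ℤ) k ((m : ℤ) - k) (by ring) _ (hle (m : ℤ) Z)))
      have hvA : ∀ m : ℕ, (H.shift k).map (Sigma.ι (fun m : ℕ => (τle (m : ℤ)).obj Z) m) ≫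
          (H.shift k).map (oneMinusShift τle σ Z) =
          (H.shift k).map (Sigma.ι (fun m : ℕ => (τle (m : ℤ)).obj Z) m) -
            (H.shift k).map (fC m) ≫
              (H.shift k).map (Sigma.ι (fun m : ℕ => (τle (m : ℤ)).obj Z) (m + 1)) := by
        intro m
        rw [← Functor.map_comp, hui m, Functor.map_sub, Functor.map_comp]
      have hwA : ∀ m : ℕ, (H.shift k).map (Sigma.ι (fun m : ℕ => (τle (m : ℤ)).obj Z) m) ≫
          ((H.shift k).map g ≫ (H.shift k).map φ) =
          (H.shift k).map ((η ((m : ℕ) : ℤ)).app Z) := by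
        intro m
        rw [← Category.assoc, ← Functor.map_comp, ← Functor.map_comp, Category.assoc, hφ m]
      have hug : oneMinusShift τle σ Z ≫ g = 0 := comp_distTriang_mor_zero₁₂ _ hT
      have hvwA : (H.shift k).map (oneMinusShift τle σ Z) ≫
          ((H.shift k).map g ≫ (H.shift k).map φ) = 0 := by
        rw [← Category.assoc, ← Functor.map_comp, hug, Functor.map_zero, zero_comp]
      refine ⟨Stmt3Aux.telescope_mono
          (fun m : ℕ => (H.shift k).obj ((τle ((m : ℕ) : ℤ)).obj Z))
          (fun m : ℕ => (H.shift k).map (fC m))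
          (fun m : ℕ => (H.shift k).map (Sigma.ι (fun m : ℕ => (τle (m : ℤ)).obj Z) m))
          hP _ hvA, ?_, ?_⟩
      · exact Stmt3Aux.telescope_epi _ (fun m => (H.shift k).map ((η ((m : ℕ) : ℤ)).app Z))
          k.toNat (hisoA _ le_rfl) _ _ hwA
      · intro T y hy
        have hex : (ShortComplex.mk _ _ hvwA).Exact :=
          ShortComplex.exact_of_g_is_cokernel _
            (Stmt3Aux.telescope_isCokernel
              (fun m : ℕ => (H.shift k).obj ((τle ((m : ℕ) : ℤ)).obj Z))
              (fun m : ℕ => (H.shift k).map (fC m))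
              (fun m => (H.shift k).map ((η ((m : ℕ) : ℤ)).app Z)) hcA k.toNat hisoA hzeroA
              (fun m : ℕ => (H.shift k).map (Sigma.ι (fun m : ℕ => (τle (m : ℤ)).obj Z) m))
              hP _ hvA _ hwA hvwA)
        exact hex.exact_up_to_refinements y hy
    -- `H` applied to shifts of `φ` is an isomorphism
    have hHiso : ∀ k : ℤ, IsIso ((H.shift k).map φ) := by
      intro k
      obtain ⟨hmono1, -, -⟩ := pack (k + 1)
      obtain ⟨-, hepi, hexact⟩ := pack k
      have hδ : H.homologySequenceδ (Triangle.mk (oneMinusShift τle σ Z) g d) k (k + 1) rfl = 0 :=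
        (H.homologySequence_mono_shift_map_mor₁_iff _ hT k (k + 1) rfl).1 hmono1
      haveI hepig : Epi ((H.shift k).map g) :=
        (H.homologySequence_epi_shift_map_mor₂_iff _ hT k (k + 1) rfl).2 hδ
      haveI : Epi ((H.shift k).map φ) := by
        haveI := hepi
        exact epi_of_epi ((H.shift k).map g) ((H.shift k).map φ)
      haveI : Mono ((H.shift k).map φ) := by
        refine Preadditive.mono_of_cancel_zero _ (fun {T} x hx => ?_)
        obtain ⟨T', π, hπ, y, hy⟩ := surjective_up_to_refinements_of_epi ((H.shift k).map g) x
        have hyw : y ≫ ((H.shift k).map g ≫ (H.shift k).map φ) = 0 := by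
          rw [← Category.assoc, ← hy, Category.assoc, hx, comp_zero]
        obtain ⟨T'', π', hπ', z, hz⟩ := hexact T' y hyw
        have hzero : (π' ≫ π) ≫ x = 0 := by
          have hug : oneMinusShift τle σ Z ≫ g = 0 := comp_distTriang_mor_zero₁₂ _ hT
          have h1 : (H.shift k).map (oneMinusShift τle σ Z) ≫ (H.shift k).map g = 0 := by
            rw [← Functor.map_comp, hug, Functor.map_zero]
          rw [Category.assoc, hy, ← Category.assoc, hz, Category.assoc, h1, comp_zero]
        haveI := hπ; haveI := hπ'
        exact zero_of_epi_comp (π' ≫ π) hzero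
      exact isIso_of_mono_of_epi _
    -- hence `H` of all shifts of the cone `W` vanishes
    have hWzero : ∀ k : ℤ, IsZero ((H.shift k).obj W) := by
      intro k
      haveI := hHiso k
      haveI hm1 : Mono ((H.shift (k + 1)).map φ) := by haveI := hHiso (k + 1); infer_instance
      have h1 : (H.shift k).map w2 = 0 :=
        (H.homologySequence_epi_shift_map_mor₁_iff _ hT2 k).1 (by exact (inferInstance : Epi ((H.shift k).map φ)))
      have hδ2 : H.homologySequenceδ (Triangle.mk φ w2 d2) k (k + 1) rfl = 0 :=
        (H.homologySequence_mono_shift_map_mor₁_iff _ hT2 k (k + 1) rfl).1 hm1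
      have hex := H.homologySequence_exact₃ _ hT2 k (k + 1) rfl
      exact (hex.isZero_X₂_iff).2 ⟨h1, hδ2⟩
    -- conclude that `W` is in all `GE n`, hence zero
    have hWGE : ∀ j : ℕ, t.ge (-2 + (j : ℤ)) W := by
      intro j
      induction j with
      | zero => simpa using hWge
      | succ j ih =>
        have := hH_detect W (-2 + (j : ℤ)) ih (hWzero (-2 + (j : ℤ)))
        have harith : (-2 : ℤ) + ((j + 1 : ℕ) : ℤ) = (-2 + (j : ℤ)) + 1 := by push_cast; ring
        rwa [harith]
    have hWzeroObj : IsZero W := by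
      refine hint W fun n => ?_
      have := hWGE (n + 2)
      have harith : (-2 : ℤ) + (((n : ℕ) + 2 : ℕ) : ℤ) = (n : ℤ) := by push_cast; ring
      rwa [harith] at this
    exact (Triangle.isZero₃_iff_isIso₁ _ hT2).1 hWzeroObj


end Stmt3
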